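/- Let A, B, C ∈ ℝ and let (ξ, η) : ℝ → ℝ² be a differentiable solution of the system ξ' = −A (η − B) η, η' = C ξ η. Then the function G(ξ, η) = A (η − B)² + C ξ² is constant along the solution. -/

import Mathlib

/-- `G(ξ, η) = A(η − B)² + Cξ²` is a first integral of the normal-form system
`ξ' = −A(η − B)η`, `η' = Cξη`. -/
theorem normal_form_first_integral
    (A B C : ℝ) (ξ η : ℝ → ℝ)
    (hξ : ∀ τ : ℝ, HasDerivAt ξ (-A * (η τ - B) * η τ) τ)
    (hη : ∀ τ : ℝ, HasDerivAt η (C * ξ τ * η τ) τ) :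
    ∀ τ σ : ℝ,
      A * (η τ - B) ^ 2 + C * (ξ τ) ^ 2 = A * (η σ - B) ^ 2 + C * (ξ σ) ^ 2 := by
  have key : ∀ τ : ℝ,
      HasDerivAt (fun t => A * (η t - B) ^ 2 + C * (ξ t) ^ 2) 0 τ := by
    intro τ
    have h1 := (((hη τ).sub_const B).pow 2).const_mul A
    have h2 := ((hξ τ).pow 2).const_mul C
    have := h1.add h2
    refine this.congr_deriv ?_
    ring
  intro τ σ
  have : ∀ t, (fun t => A * (η t - B) ^ 2 + C * (ξ t) ^ 2) t =
      (fun t => A * (η σ - B) ^ 2 + C * (ξ σ) ^ 2) t := by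
    have := is_const_of_deriv_eq_zero (f := fun t => A * (η t - B) ^ 2 + C * (ξ t) ^ 2)
      (fun t => (key t).differentiableAt) (fun t => (key t).deriv)
    intro t; exact this t σ
  exact this τ
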